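/- For any two probability distributions D and D' on a common measurable space, the Jensen–Shannon divergence satisfies D_JS(D, D') ≤ (1/2) ‖D − D'‖₁, where ‖D − D'‖₁ is the L1 (total variation, times two) distance between the distributions. -/

import Mathlib

open scoped ENNReal

/-- Kullback–Leibler divergence (base-2 logarithm) between two mass functions,
with the usual conventions `0 log 0 = 0`. -/
noncomputable def klFun {α : Type*} (P Q : α → ℝ≥0∞) : ℝ :=
  ∑' a, (P a).toReal * Real.logb 2 ((P a).toReal / (Q a).toReal)

/-- Jensen–Shannon divergence (base-2 logarithm):
`D_JS(P, Q) = (1/2) D_KL(P ‖ M) + (1/2) D_KL(Q ‖ M)` where `M = (P + Q)/2`. -/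
noncomputable def jsFun {α : Type*} (P Q : α → ℝ≥0∞) : ℝ :=
  (klFun P (fun a => (P a + Q a) / 2) + klFun Q (fun a => (P a + Q a) / 2)) / 2

/-- Chord inequality for `log` on `[1,2]`. -/
lemma chord_log {u : ℝ} (h1 : 1 ≤ u) (h2 : u ≤ 2) : (u - 1) * Real.log 2 ≤ Real.log u := by
  have hc := strictConcaveOn_log_Ioi.concaveOn.2 (Set.mem_Ioi.mpr (by norm_num : (0:ℝ) < 1))
    (Set.mem_Ioi.mpr (by norm_num : (0:ℝ) < 2))
    (show (0:ℝ) ≤ 2 - u by linarith) (show (0:ℝ) ≤ u - 1 by linarith) (by ring)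
  simp only [smul_eq_mul, Real.log_one, mul_zero, mul_one, zero_add] at hc
  have harg : 2 - u + (u - 1) * 2 = u := by ring
  rwa [harg] at hc

/-- `b log 2 ≤ -(1-b) log (1-b)` for `b ∈ [0, 1/2]`. -/
lemma ent1 {b : ℝ} (hb0 : 0 ≤ b) (hb : b ≤ 1/2) :
    b * Real.log 2 ≤ -((1 - b) * Real.log (1 - b)) := by
  have h1b : (0:ℝ) < 1 - b := by linarith
  set u : ℝ := (1 - b)⁻¹ with hu
  have hu1 : 1 ≤ u := by
    rw [hu, le_inv_comm₀ one_pos h1b]; linarith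
  have hu2 : u ≤ 2 := by
    rw [hu, inv_le_comm₀ h1b (by norm_num)]; linarith
  have hcl := chord_log hu1 hu2
  have hlog : Real.log (1 - b) = -Real.log u := by
    rw [hu, Real.log_inv]; ring
  have hmul : (1 - b) * ((u - 1) * Real.log 2) ≤ (1 - b) * Real.log u :=
    mul_le_mul_of_nonneg_left hcl h1b.le
  have hb' : (1 - b) * (u - 1) = b := by
    rw [hu, mul_sub, mul_inv_cancel₀ h1b.ne']; ring
  calc b * Real.log 2 = (1 - b) * (u - 1) * Real.log 2 := by rw [hb']
    _ = (1 - b) * ((u - 1) * Real.log 2) := by ring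
    _ ≤ (1 - b) * Real.log u := hmul
    _ = -((1 - b) * Real.log (1 - b)) := by rw [hlog]; ring

/-- `b log 2 ≤ -b log b` for `b ∈ [0, 1/2]`. -/
lemma ent2 {b : ℝ} (hb0 : 0 ≤ b) (hb : b ≤ 1/2) :
    b * Real.log 2 ≤ -(b * Real.log b) := by
  rcases hb0.eq_or_lt with rfl | hb0'
  · simp
  · have h21 : (2:ℝ) ≤ 1/b := (le_div_iff₀ hb0').mpr (by linarith)
    have hlb : Real.log 2 ≤ Real.log (1/b) := Real.log_le_log (by norm_num) h21
    rw [one_div, Real.log_inv] at hlb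
    nlinarith [hb0'.le]

/-- Key pointwise inequality, sorted case. -/
lemma key_sorted {p q : ℝ} (hq : 0 ≤ q) (hqp : q ≤ p) :
    p * Real.logb 2 (p / ((p + q)/2)) + q * Real.logb 2 (q / ((p + q)/2)) ≤ p - q := by
  have hp : 0 ≤ p := le_trans hq hqp
  rcases hp.eq_or_lt with rfl | hp'
  · have : q = 0 := le_antisymm hqp hq
    simp [this]
  rcases hq.eq_or_lt with rfl | hq'
  · have h2 : p / ((p + 0)/2) = 2 := by field_simp; simp
    rw [h2, Real.logb_self_eq_one (by norm_num)]
    simp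
  · -- p, q > 0
    have hs : (0:ℝ) < p + q := by linarith
    have hlog2 : (0:ℝ) < Real.log 2 := Real.log_pos (by norm_num)
    have hb0 : 0 ≤ q / (p + q) := by positivity
    have hb : q / (p + q) ≤ 1/2 := by
      rw [div_le_iff₀ hs]; linarith
    have h1b : 1 - q / (p + q) = p / (p + q) := by field_simp; ring
    have e1 := ent1 hb0 hb
    have e2 := ent2 hb0 hb
    rw [h1b] at e1
    have E1 : q * Real.log 2 ≤ -(p * Real.log (p / (p+q))) := by
      have hmul := mul_le_mul_of_nonneg_left e1 hs.le
      have h1 : (p+q) * (q / (p+q) * Real.log 2) = q * Real.log 2 := by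
        field_simp
      have h2 : (p+q) * -(p / (p+q) * Real.log (p / (p+q))) = -(p * Real.log (p/(p+q))) := by
        field_simp
      rw [h1, h2] at hmul; exact hmul
    have E2 : q * Real.log 2 ≤ -(q * Real.log (q / (p+q))) := by
      have hmul := mul_le_mul_of_nonneg_left e2 hs.le
      have h1 : (p+q) * (q / (p+q) * Real.log 2) = q * Real.log 2 := by
        field_simp
      have h2 : (p+q) * -(q / (p+q) * Real.log (q / (p+q))) = -(q * Real.log (q/(p+q))) := by
        field_simp
      rw [h1, h2] at hmul; exact hmul
    have harg1 : p / ((p + q)/2) = 2 * (p / (p+q)) := by field_simp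
    have harg2 : q / ((p + q)/2) = 2 * (q / (p+q)) := by field_simp
    have hpos1 : (0:ℝ) < p / (p+q) := by positivity
    have hpos2 : (0:ℝ) < q / (p+q) := by positivity
    rw [harg1, harg2]
    unfold Real.logb
    rw [Real.log_mul (by norm_num) hpos1.ne', Real.log_mul (by norm_num) hpos2.ne']
    have hexp : p * ((Real.log 2 + Real.log (p/(p+q))) / Real.log 2)
        + q * ((Real.log 2 + Real.log (q/(p+q))) / Real.log 2)
        = (p + q) + (p * Real.log (p/(p+q)) + q * Real.log (q/(p+q))) / Real.log 2 := by
      field_simp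
      ring
    rw [hexp]
    have hfin : (p * Real.log (p/(p+q)) + q * Real.log (q/(p+q))) / Real.log 2 ≤ -(2*q) :=
      (div_le_iff₀ hlog2).mpr (by nlinarith [E1, E2])
    linarith

lemma key {p q : ℝ} (hp : 0 ≤ p) (hq : 0 ≤ q) :
    p * Real.logb 2 (p / ((p + q)/2)) + q * Real.logb 2 (q / ((p + q)/2)) ≤ |p - q| := by
  rcases le_total q p with h | h
  · calc _ ≤ p - q := key_sorted hq h
      _ ≤ |p - q| := le_abs_self _
  · have H := key_sorted (p := q) (q := p) hp h
    rw [add_comm q p] at H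
    rw [abs_sub_comm]
    calc p * Real.logb 2 (p / ((p + q)/2)) + q * Real.logb 2 (q / ((p + q)/2))
        ≤ q - p := by linarith
      _ ≤ |q - p| := le_abs_self _

/-- Absolute bound on a single KL summand. -/
lemma abs_term_le {p q : ℝ} (hp : 0 ≤ p) (hq : 0 ≤ q) :
    |p * Real.logb 2 (p / ((p + q)/2))| ≤ p + q := by
  rcases hp.eq_or_lt with rfl | hp'
  · simp; linarith
  have hm : (0:ℝ) < (p + q)/2 := by linarith
  have hlog2 : (0:ℝ) < Real.log 2 := Real.log_pos (by norm_num)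
  have h2 : (0.6931471803:ℝ) < Real.log 2 := Real.log_two_gt_d9
  have hpos : (0:ℝ) < p / ((p+q)/2) := by positivity
  rw [abs_le]
  constructor
  · -- lower bound
    have hlow : Real.log (((p+q)/2) / p) ≤ ((p+q)/2)/p - 1 :=
      Real.log_le_sub_one_of_pos (by positivity)
    have hinv : Real.log (p / ((p+q)/2)) = -Real.log (((p+q)/2)/p) := by
      rw [← Real.log_inv, inv_div]
    have hlo : -(q/2) ≤ p * Real.log (p / ((p+q)/2)) := by
      rw [hinv]
      have hmul := mul_le_mul_of_nonneg_left hlow hp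
      have hr : p * (((p+q)/2)/p - 1) = (q - p)/2 := by field_simp; ring
      nlinarith
    unfold Real.logb
    have hrw : p * (Real.log (p/((p+q)/2)) / Real.log 2)
        = (p * Real.log (p/((p+q)/2))) / Real.log 2 := by ring
    rw [hrw, le_div_iff₀ hlog2]
    nlinarith
  · -- upper bound
    have harg : p / ((p+q)/2) ≤ 2 := by
      rw [div_le_iff₀ hm]; linarith
    have hub : Real.logb 2 (p / ((p+q)/2)) ≤ 1 := by
      have := (Real.logb_le_logb (by norm_num : (1:ℝ) < 2) hpos (by norm_num : (0:ℝ) < 2)).2 harg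
      rwa [Real.logb_self_eq_one (by norm_num)] at this
    nlinarith

/-- Lin's lemma: for any two probability distributions `P` and `Q`,
`D_JS(P, Q) ≤ (1/2) ‖P - Q‖₁`. -/
theorem jsFun_le_half_l1 {α : Type*} (P Q : PMF α) :
    jsFun (⇑P) (⇑Q) ≤ (1/2) * ∑' a, |(P a).toReal - (Q a).toReal| := by
  set f : α → ℝ := fun a => (P a).toReal with hf
  set g : α → ℝ := fun a => (Q a).toReal with hg
  have hf0 : ∀ a, 0 ≤ f a := fun a => ENNReal.toReal_nonneg
  have hg0 : ∀ a, 0 ≤ g a := fun a => ENNReal.toReal_nonneg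
  have hM : ∀ a, ((P a + Q a)/2 : ℝ≥0∞).toReal = (f a + g a)/2 := by
    intro a
    rw [ENNReal.toReal_div, ENNReal.toReal_add (P.apply_ne_top a) (Q.apply_ne_top a)]
    norm_num
    rfl
  have hfs : Summable f := ENNReal.summable_toReal (by rw [P.tsum_coe]; exact ENNReal.one_ne_top)
  have hgs : Summable g := ENNReal.summable_toReal (by rw [Q.tsum_coe]; exact ENNReal.one_ne_top)
  set x : α → ℝ := fun a => f a * Real.logb 2 (f a / ((f a + g a)/2)) with hx
  set y : α → ℝ := fun a => g a * Real.logb 2 (g a / ((f a + g a)/2)) with hy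
  have hxs : Summable x := by
    apply Summable.of_abs
    exact Summable.of_nonneg_of_le (fun a => abs_nonneg _)
      (fun a => abs_term_le (hf0 a) (hg0 a)) (hfs.add hgs)
  have hys : Summable y := by
    apply Summable.of_abs
    refine Summable.of_nonneg_of_le (fun a => abs_nonneg _) (fun a => ?_) (hfs.add hgs)
    have h := abs_term_le (hg0 a) (hf0 a)
    rw [add_comm (g a) (f a)] at h
    calc |y a| = |g a * Real.logb 2 (g a / ((f a + g a)/2))| := rfl
      _ ≤ f a + g a := by linarith
  have habs : Summable (fun a => |f a - g a|) :=
    Summable.of_nonneg_of_le (fun a => abs_nonneg _)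
      (fun a => by
        calc |f a - g a| ≤ |f a| + |g a| := abs_sub _ _
          _ = f a + g a := by rw [abs_of_nonneg (hf0 a), abs_of_nonneg (hg0 a)])
      (hfs.add hgs)
  have hkl1 : klFun (⇑P) (fun a => (P a + Q a)/2) = ∑' a, x a := by
    unfold klFun
    exact tsum_congr fun a => by rw [hM a]
  have hkl2 : klFun (⇑Q) (fun a => (P a + Q a)/2) = ∑' a, y a := by
    unfold klFun
    exact tsum_congr fun a => by rw [hM a]
  have hsum : ∑' a, x a + ∑' a, y a ≤ ∑' a, |f a - g a| := by
    rw [← Summable.tsum_add hxs hys]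
    exact Summable.tsum_le_tsum (fun a => key (hf0 a) (hg0 a)) (hxs.add hys) habs
  unfold jsFun
  rw [hkl1, hkl2]
  linarith
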